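/- A permutation w ∈ S_n is join-irreducible in the middle order P_n (covers exactly one element) if and only if its inversion sequence I(w) has exactly one nonzero entry; equivalently, w in one-line notation equals 1 2 ... i j (i+1) (i+2) ... (j−1) (j+1) ... n for some 0 ≤ i ≤ n−2 and i+2 ≤ j ≤ n, i.e., w is a single cycle (j, j−1, ..., i+1) of size at least 2 on consecutive values. -/
import Mathlib

/-- The inversion sequence of a permutation `w` of `Fin n` (0-indexed values):
`invSeq w i` counts the values `j < i` appearing after `i` in one-line notation. -/
def invSeq {n : ℕ} (w : Equiv.Perm (Fin n)) (i : Fin n) : ℕ :=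
  (Finset.univ.filter (fun j : Fin n => j < i ∧ w.symm i < w.symm j)).card

/-- The middle order on permutations: coordinate-wise comparison of inversion sequences. -/
def midLe {n : ℕ} (v w : Equiv.Perm (Fin n)) : Prop :=
  ∀ i, invSeq v i ≤ invSeq w i

/-- `v` is covered by `w` in the middle order. -/
def midCovBy {n : ℕ} (v w : Equiv.Perm (Fin n)) : Prop :=
  midLe v w ∧ v ≠ w ∧ ∀ u, midLe v u → midLe u w → u = v ∨ u = w

open Finset

lemma card_filter_lt {n : ℕ} (i : Fin n) :
    (univ.filter (fun j : Fin n => j < i)).card = (i : ℕ) := by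
  rw [← Fin.card_Iio i]; congr 1; ext x; simp

lemma invSeq_le {n : ℕ} (w : Equiv.Perm (Fin n)) (i : Fin n) : invSeq w i ≤ (i : ℕ) := by
  rw [← card_filter_lt i]
  exact Finset.card_le_card (by intro x hx; simp at hx ⊢; exact hx.1)

lemma invSeq_one {n : ℕ} (i : Fin n) : invSeq (1 : Equiv.Perm (Fin n)) i = 0 := by
  simp only [invSeq, Finset.card_eq_zero, Finset.filter_eq_empty_iff]
  intro j _
  simp only [Equiv.Perm.one_def]
  simp only [Equiv.refl_symm, Equiv.refl_apply]
  rintro ⟨h1, h2⟩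
  exact absurd h2 (not_lt.mpr h1.le)

lemma keymem {n : ℕ} (a : Fin n → Fin n) (ha : Function.Injective a) (i x : Fin n) (hx : x < i) :
    (a i < a x ↔ (i:ℕ) - (univ.filter fun l : Fin n => l < i ∧ a i < a l).card ≤
      (univ.filter fun l : Fin n => l < i ∧ a l < a x).card) := by
  set S := univ.filter fun l : Fin n => l < i ∧ a i < a l with hS
  set S' := univ.filter fun l : Fin n => l < i ∧ a l < a i with hS'
  have hcard : S.card + S'.card = (i : ℕ) := by
    rw [← Finset.card_union_of_disjoint]
    · rw [← (by rw [← Fin.card_Iio i]; congr 1; ext x; simp :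
        (univ.filter (fun j : Fin n => j < i)).card = (i : ℕ))]
      congr 1
      ext l
      simp only [hS, hS', Finset.mem_union, Finset.mem_filter, Finset.mem_univ, true_and]
      constructor
      · rintro (⟨h1, _⟩ | ⟨h1, _⟩) <;> exact h1
      · intro h1
        rcases lt_or_gt_of_ne (ha.ne (ne_of_lt h1)) with h2 | h2
        · right; exact ⟨h1, h2⟩
        · left; exact ⟨h1, h2⟩
    · rw [Finset.disjoint_left]
      intro l hl hl'
      simp only [hS, hS', Finset.mem_filter] at hl hl'
      exact absurd hl'.2.2 (not_lt.mpr hl.2.2.le)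
  by_cases h : a i < a x
  · simp only [h, true_iff]
    have hsub : S' ⊆ univ.filter fun l : Fin n => l < i ∧ a l < a x := by
      intro l hl
      simp only [hS', Finset.mem_filter] at hl ⊢
      exact ⟨Finset.mem_univ _, hl.2.1, lt_trans hl.2.2 h⟩
    have := Finset.card_le_card hsub
    omega
  · have h' : a x < a i := (lt_or_gt_of_ne (ha.ne (ne_of_lt hx).symm)).resolve_left h
    simp only [h, false_iff, not_le]
    have hxS' : x ∈ S' := by simp [hS', hx, h']
    have hsub : (univ.filter fun l : Fin n => l < i ∧ a l < a x) ⊆ S'.erase x := by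
      intro l hl
      simp only [Finset.mem_filter, Finset.mem_univ, true_and] at hl
      rw [Finset.mem_erase]
      refine ⟨fun hlx => absurd hl.2 (by rw [hlx]; exact lt_irrefl _), ?_⟩
      simp only [hS', Finset.mem_filter]
      exact ⟨Finset.mem_univ _, hl.1, lt_trans hl.2 h'⟩
    have h1 := Finset.card_le_card hsub
    have h2 : (S'.erase x).card = S'.card - 1 := Finset.card_erase_of_mem hxS'
    have h3 : 1 ≤ S'.card := Finset.card_pos.mpr ⟨x, hxS'⟩
    omega

lemma core {n : ℕ} (a b : Fin n → Fin n) (ha : Function.Injective a) (hb : Function.Injective b)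
    (i : Fin n)
    (hcode : (univ.filter fun l : Fin n => l < i ∧ a i < a l).card =
      (univ.filter fun l : Fin n => l < i ∧ b i < b l).card)
    (IH : ∀ j k : Fin n, j < i → k < i → (a j < a k ↔ b j < b k))
    (j : Fin n) (hj : j < i) : (a i < a j ↔ b i < b j) := by
  rw [keymem a ha i j hj, keymem b hb i j hj, hcode]
  have : (univ.filter fun l : Fin n => l < i ∧ a l < a j) =
      (univ.filter fun l : Fin n => l < i ∧ b l < b j) := by
    apply Finset.filter_congr
    intro l _
    constructor
    · rintro ⟨h1, h2⟩; exact ⟨h1, (IH l j h1 hj).mp h2⟩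
    · rintro ⟨h1, h2⟩; exact ⟨h1, (IH l j h1 hj).mpr h2⟩
  rw [this]

lemma flip_iff {α β : Type*} [LinearOrder α] [LinearOrder β] {x y : α} {x' y' : β}
    (h : x < y ↔ x' < y') (hne : x ≠ y) (hne' : x' ≠ y') : y < x ↔ y' < x' := by
  constructor
  · intro hyx
    rcases hne'.lt_or_gt with h2 | h2
    · exact absurd (h.mpr h2) (asymm hyx)
    · exact h2
  · intro hyx
    rcases hne.lt_or_gt with h1 | h1
    · exact absurd (h.mp h1) (asymm hyx)
    · exact h1

lemma perm_filter_lt_card {n : ℕ} (σ : Equiv.Perm (Fin n)) (t : Fin n) :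
    (univ.filter fun l : Fin n => σ l < t).card = (t : ℕ) := by
  rw [← (by rw [← Fin.card_Iio t]; congr 1; ext x; simp :
      (univ.filter (fun j : Fin n => j < t)).card = (t : ℕ))]
  apply Finset.card_bij (fun l _ => σ l)
  · intro l hl; simp only [Finset.mem_filter, Finset.mem_univ, true_and] at hl ⊢; exact hl
  · intro l1 h1 l2 h2 he; exact σ.injective he
  · intro y hy
    simp only [Finset.mem_filter, Finset.mem_univ, true_and] at hy
    exact ⟨σ.symm y, by simp [hy], by simp⟩

lemma invSeq_injective {n : ℕ} {v w : Equiv.Perm (Fin n)}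
    (h : ∀ i, invSeq v i = invSeq w i) : v = w := by
  have ha : Function.Injective (⇑v.symm) := v.symm.injective
  have hb : Function.Injective (⇑w.symm) := w.symm.injective
  have main : ∀ m : ℕ, ∀ j k : Fin n, (j:ℕ) ≤ m → (k:ℕ) ≤ m →
      (v.symm j < v.symm k ↔ w.symm j < w.symm k) := by
    intro m
    induction m using Nat.strong_induction_on with
    | _ m IH =>
      intro j k hj hk
      rcases eq_or_ne j k with rfl | hjk
      · simp
      · by_cases hsm : (j:ℕ) < m ∧ (k:ℕ) < m
        · exact IH (max (j:ℕ) (k:ℕ)) (by omega) j k (le_max_left _ _) (le_max_right _ _)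
        · have IH' : ∀ (i : Fin n), ∀ j' k' : Fin n, j' < i → k' < i → (i:ℕ) ≤ m →
              (v.symm j' < v.symm k' ↔ w.symm j' < w.symm k') := by
            intro i j' k' hj' hk' him
            have h1 := Fin.lt_iff_val_lt_val.mp hj'
            have h2 := Fin.lt_iff_val_lt_val.mp hk'
            exact IH (max (j':ℕ) (k':ℕ)) (by omega) j' k' (le_max_left _ _) (le_max_right _ _)
          rcases eq_or_ne (k:ℕ) m with hkm | hkm
          · have hjlt : j < k := Fin.lt_iff_val_lt_val.mpr (by omega)
            exact flip_iff
              (core _ _ ha hb k (h k) (fun j' k' hj' hk' => IH' k j' k' hj' hk' (le_of_eq hkm)) j hjlt)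
              (ha.ne hjk.symm) (hb.ne hjk.symm)
          · have hjm : (j:ℕ) = m := by omega
            have hklt : k < j := Fin.lt_iff_val_lt_val.mpr (by omega)
            exact core _ _ ha hb j (h j) (fun j' k' hj' hk' => IH' j j' k' hj' hk' (le_of_eq hjm)) k hklt
  have horder : ∀ j k : Fin n, v.symm j < v.symm k ↔ w.symm j < w.symm k :=
    fun j k => main (max (j:ℕ) (k:ℕ)) j k (le_max_left _ _) (le_max_right _ _)
  have hsymm : v.symm = w.symm := by
    apply Equiv.ext
    intro x
    apply Fin.ext
    rw [← perm_filter_lt_card v.symm (v.symm x), ← perm_filter_lt_card w.symm (w.symm x)]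
    congr 1
    apply Finset.filter_congr
    intro l _
    exact horder l x
  calc v = v.symm.symm := (Equiv.symm_symm v).symm
    _ = w.symm.symm := by rw [hsymm]
    _ = w := Equiv.symm_symm w

lemma invSeq_surjective {n : ℕ} (f : Fin n → ℕ) (hf : ∀ i : Fin n, f i ≤ (i:ℕ)) :
    ∃ w : Equiv.Perm (Fin n), ∀ i, invSeq w i = f i := by
  set codeF : Equiv.Perm (Fin n) → (∀ i : Fin n, Fin ((i:ℕ)+1)) :=
    fun w i => ⟨invSeq w i, Nat.lt_succ_of_le (invSeq_le w i)⟩ with hcodeF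
  have hinj : Function.Injective codeF := by
    intro v w hvw
    apply invSeq_injective
    intro i
    have := congrFun hvw i
    simpa [hcodeF, Fin.ext_iff] using this
  have hcard : Fintype.card (Equiv.Perm (Fin n)) = Fintype.card (∀ i : Fin n, Fin ((i:ℕ)+1)) := by
    rw [Fintype.card_perm, Fintype.card_pi]
    simp only [Fintype.card_fin, Fintype.card_fin]
    rw [Fin.prod_univ_eq_prod_range (fun m => m + 1) n]
    exact (Finset.prod_range_add_one_eq_factorial n).symm
  have hbij : Function.Bijective codeF :=
    (Fintype.bijective_iff_injective_and_card codeF).mpr ⟨hinj, hcard⟩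
  obtain ⟨w, hw⟩ := hbij.2 (fun i => ⟨f i, Nat.lt_succ_of_le (hf i)⟩)
  refine ⟨w, fun i => ?_⟩
  have := congrFun hw i
  simpa [hcodeF, Fin.ext_iff] using this

def cycPerm (n i j : ℕ) (hij : i + 2 ≤ j) (hj : j ≤ n) : Equiv.Perm (Fin n) where
  toFun p := ⟨if (p:ℕ) < i then (p:ℕ) else if (p:ℕ) = i then j - 1
      else if (p:ℕ) ≤ j - 1 then (p:ℕ) - 1 else (p:ℕ), by
    have := p.isLt; split_ifs <;> omega⟩
  invFun q := ⟨if (q:ℕ) < i then (q:ℕ) else if (q:ℕ) = j - 1 then i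
      else if (q:ℕ) < j - 1 then (q:ℕ) + 1 else (q:ℕ), by
    have := q.isLt; split_ifs <;> omega⟩
  left_inv p := by
    have := p.isLt
    apply Fin.ext
    simp only
    split_ifs <;> omega
  right_inv q := by
    have := q.isLt
    apply Fin.ext
    simp only
    split_ifs <;> omega

lemma cycPerm_apply (n i j : ℕ) (hij : i + 2 ≤ j) (hj : j ≤ n) (p : Fin n) :
    ((cycPerm n i j hij hj) p : ℕ) = if (p:ℕ) < i then (p:ℕ) else if (p:ℕ) = i then j - 1
      else if (p:ℕ) ≤ j - 1 then (p:ℕ) - 1 else (p:ℕ) := rfl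

lemma cycPerm_symm_apply (n i j : ℕ) (hij : i + 2 ≤ j) (hj : j ≤ n) (q : Fin n) :
    ((cycPerm n i j hij hj).symm q : ℕ) = if (q:ℕ) < i then (q:ℕ) else if (q:ℕ) = j - 1 then i
      else if (q:ℕ) < j - 1 then (q:ℕ) + 1 else (q:ℕ) := rfl

lemma invSeq_cycPerm (n i j : ℕ) (hij : i + 2 ≤ j) (hj : j ≤ n) (v : Fin n) :
    invSeq (cycPerm n i j hij hj) v = if (v:ℕ) = j - 1 then j - 1 - i else 0 := by
  rcases eq_or_ne (v:ℕ) (j-1) with hv | hv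
  · rw [if_pos hv]
    have hfil : (univ.filter (fun u : Fin n => u < v ∧
        (cycPerm n i j hij hj).symm v < (cycPerm n i j hij hj).symm u)) =
        (univ.filter (fun u : Fin n => i ≤ (u:ℕ) ∧ (u:ℕ) < j - 1)) := by
      ext u
      simp only [Finset.mem_filter, Finset.mem_univ, true_and, Fin.lt_iff_val_lt_val,
        cycPerm_symm_apply, hv]
      have hu := u.isLt
      split_ifs <;> omega
    rw [invSeq, hfil]
    rw [Finset.card_bij' (fun (u : Fin n) _ => (u:ℕ)) (fun (m : ℕ) hm => (⟨m, by
        simp only [Finset.mem_Ico] at hm; omega⟩ : Fin n)) ?_ ?_ ?_ ?_ (t := Finset.Ico i (j-1))]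
    · rw [Nat.card_Ico]
    · intro u hu; simp only [Finset.mem_filter, Finset.mem_univ, true_and] at hu
      simp [Finset.mem_Ico, hu.1, hu.2]
    · intro m hm; simp only [Finset.mem_Ico] at hm
      simp [hm.1, hm.2]
    · intro u hu; rfl
    · intro m hm; rfl
  · rw [if_neg hv]
    rw [invSeq, Finset.card_eq_zero, Finset.filter_eq_empty_iff]
    intro u _
    simp only [Fin.lt_iff_val_lt_val, cycPerm_symm_apply, not_and]
    intro hlt
    have hu := u.isLt
    have hvn := v.isLt
    split_ifs <;> omega

lemma mid_cov_of_dec {n : ℕ} {v w : Equiv.Perm (Fin n)} {k : Fin n}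
    (hoff : ∀ l, l ≠ k → invSeq v l = invSeq w l) (hk : invSeq v k + 1 = invSeq w k) :
    midCovBy v w := by
  refine ⟨fun l => ?_, fun he => by rw [he] at hk; omega, fun u h1 h2 => ?_⟩
  · rcases eq_or_ne l k with rfl | hl
    · omega
    · exact le_of_eq (hoff l hl)
  · rcases eq_or_ne (invSeq u k) (invSeq v k) with he | he
    · left
      apply invSeq_injective
      intro l
      rcases eq_or_ne l k with rfl | hl
      · exact he
      · have := h1 l; have := h2 l; have := hoff l hl; omega
    · right
      apply invSeq_injective
      intro l
      rcases eq_or_ne l k with rfl | hl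
      · have := h1 l; have := h2 l; omega
      · have := h1 l; have := h2 l; have := hoff l hl; omega

lemma exists_dec {n : ℕ} (w : Equiv.Perm (Fin n)) (k : Fin n) (hk : invSeq w k ≠ 0) :
    ∃ v : Equiv.Perm (Fin n), (∀ l, l ≠ k → invSeq v l = invSeq w l) ∧
      invSeq v k + 1 = invSeq w k := by
  obtain ⟨v, hv⟩ := invSeq_surjective (Function.update (fun l => invSeq w l) k (invSeq w k - 1))
    (by
      intro l
      rcases eq_or_ne l k with rfl | hl
      · simp only [Function.update_self]
        have := invSeq_le w l; omega
      · rw [Function.update_of_ne hl]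
        exact invSeq_le w l)
  refine ⟨v, fun l hl => ?_, ?_⟩
  · rw [hv l, Function.update_of_ne hl]
  · rw [hv k, Function.update_self]; omega


theorem key1 {n : ℕ} (w : Equiv.Perm (Fin n)) :
    (w ≠ 1 ∧ ∃! v, midCovBy v w) ↔
      (Finset.univ.filter (fun i : Fin n => invSeq w i ≠ 0)).card = 1 := by
  constructor
  · rintro ⟨hw1, v0, hv0, huniq⟩
    rcases Nat.lt_or_ge (univ.filter (fun i : Fin n => invSeq w i ≠ 0)).card 2 with hlt | hge
    · interval_cases h : (univ.filter (fun i : Fin n => invSeq w i ≠ 0)).card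
      · exfalso
        apply hw1
        apply invSeq_injective
        intro l
        rw [invSeq_one]
        have : l ∉ univ.filter (fun i : Fin n => invSeq w i ≠ 0) := by
          rw [Finset.card_eq_zero.mp h]; exact Finset.notMem_empty l
        simpa using this
      · rfl
    · exfalso
      obtain ⟨k, hkmem, l, hlmem, hkl⟩ := Finset.one_lt_card.mp hge
      simp only [Finset.mem_filter, Finset.mem_univ, true_and] at hkmem hlmem
      obtain ⟨v1, hv1off, hv1k⟩ := exists_dec w k hkmem
      obtain ⟨v2, hv2off, hv2k⟩ := exists_dec w l hlmem
      have he1 : v1 = v0 := huniq v1 (mid_cov_of_dec hv1off hv1k)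
      have he2 : v2 = v0 := huniq v2 (mid_cov_of_dec hv2off hv2k)
      have : invSeq v1 l = invSeq v2 l := by rw [he1, he2]
      rw [hv1off l (Ne.symm hkl)] at this
      omega
  · intro hcard
    obtain ⟨k, hk⟩ := Finset.card_eq_one.mp hcard
    have hkmem : invSeq w k ≠ 0 := by
      have : k ∈ univ.filter (fun i : Fin n => invSeq w i ≠ 0) := by
        rw [hk]; exact Finset.mem_singleton_self k
      simpa using this
    have hoff : ∀ l, l ≠ k → invSeq w l = 0 := by
      intro l hl
      by_contra hne
      have : l ∈ univ.filter (fun i : Fin n => invSeq w i ≠ 0) := by simpa using hne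
      rw [hk, Finset.mem_singleton] at this
      exact hl this
    constructor
    · intro he
      rw [he, invSeq_one] at hkmem
      exact hkmem rfl
    · obtain ⟨v, hvoff, hvk⟩ := exists_dec w k hkmem
      refine ⟨v, mid_cov_of_dec hvoff hvk, ?_⟩
      rintro v' ⟨hle, hne, hcov⟩
      have hall : midLe v' v := by
        intro l
        rcases eq_or_ne l k with rfl | hl
        · by_contra hgt
          apply hne
          apply invSeq_injective
          intro l'
          rcases eq_or_ne l' l with rfl | hl'
          · have := hle l'; omega
          · have := hle l'; have := hoff l' hl'; omega
        · have := hle l; have := hoff l hl; rw [hvoff l hl]; omega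
      rcases hcov v hall (fun l => (mid_cov_of_dec hvoff hvk).1 l) with he | he
      · exact he.symm
      · exfalso
        rw [he] at hvk
        omega

theorem key2 {n : ℕ} (w : Equiv.Perm (Fin n)) :
    (Finset.univ.filter (fun i : Fin n => invSeq w i ≠ 0)).card = 1 ↔
      (∃ i j : ℕ, i + 2 ≤ j ∧ j ≤ n ∧
        ∀ p : Fin n, (w p : ℕ) =
          if (p : ℕ) < i then (p : ℕ)
          else if (p : ℕ) = i then j - 1
          else if (p : ℕ) ≤ j - 1 then (p : ℕ) - 1
          else (p : ℕ)) := by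
  constructor
  · intro hcard
    obtain ⟨k, hk⟩ := Finset.card_eq_one.mp hcard
    have hkmem : invSeq w k ≠ 0 := by
      have : k ∈ univ.filter (fun i : Fin n => invSeq w i ≠ 0) := by
        rw [hk]; exact Finset.mem_singleton_self k
      simpa using this
    have hoff : ∀ l, l ≠ k → invSeq w l = 0 := by
      intro l hl
      by_contra hne
      have : l ∈ univ.filter (fun i : Fin n => invSeq w i ≠ 0) := by simpa using hne
      rw [hk, Finset.mem_singleton] at this
      exact hl this
    have hm := invSeq_le w k
    have hkn := k.isLt
    refine ⟨(k:ℕ) - invSeq w k, (k:ℕ) + 1, by omega, by omega, ?_⟩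
    have hw : w = cycPerm n ((k:ℕ) - invSeq w k) ((k:ℕ) + 1) (by omega) (by omega) := by
      apply invSeq_injective
      intro l
      rw [invSeq_cycPerm]
      rcases eq_or_ne l k with rfl | hl
      · rw [if_pos (show ((l:ℕ)) = (l:ℕ)+1-1 by omega)]
        omega
      · rw [if_neg (by
          intro he
          apply hl
          apply Fin.ext
          omega)]
        exact hoff l hl
    intro p
    conv_lhs => rw [hw]
    rw [cycPerm_apply]
  · rintro ⟨i, j, hij, hj, hform⟩
    have hw : w = cycPerm n i j hij hj := by
      apply Equiv.ext
      intro p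
      apply Fin.ext
      rw [hform p, cycPerm_apply]
    have hjn : j - 1 < n := by omega
    rw [Finset.card_eq_one]
    refine ⟨⟨j-1, hjn⟩, ?_⟩
    rw [Finset.eq_singleton_iff_unique_mem]
    constructor
    · simp only [Finset.mem_filter, Finset.mem_univ, true_and, hw, invSeq_cycPerm]
      rw [if_pos trivial]
      omega
    · intro x hx
      simp only [Finset.mem_filter, Finset.mem_univ, true_and, hw, invSeq_cycPerm] at hx
      apply Fin.ext
      by_contra hne
      rw [if_neg hne] at hx
      exact hx rfl

/-- A permutation is join-irreducible in the middle order (non-minimum, covering exactly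
one element) iff its inversion sequence has exactly one nonzero entry, iff in one-line
notation it is `1 2 ⋯ i j (i+1) (i+2) ⋯ (j-1) (j+1) ⋯ n` for some `0 ≤ i ≤ n-2` and
`i+2 ≤ j ≤ n` (here written 0-indexed). -/
theorem middle_order_join_irreducibles (n : ℕ) (w : Equiv.Perm (Fin n)) :
    ((w ≠ 1 ∧ ∃! v, midCovBy v w) ↔
      (Finset.univ.filter (fun i : Fin n => invSeq w i ≠ 0)).card = 1) ∧
    ((w ≠ 1 ∧ ∃! v, midCovBy v w) ↔
      ∃ i j : ℕ, i + 2 ≤ j ∧ j ≤ n ∧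
        ∀ p : Fin n, (w p : ℕ) =
          if (p : ℕ) < i then (p : ℕ)
          else if (p : ℕ) = i then j - 1
          else if (p : ℕ) ≤ j - 1 then (p : ℕ) - 1
          else (p : ℕ)) := by
  exact ⟨key1 w, (key1 w).trans (key2 w)⟩
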